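/- Let h = h_{1,1} and t be the Prouhet–Thue–Morse sequence, and for k ∈ ℕ and integers n ≥ 2^{k+1} - 2 set F(k,n) = ∑_{i=0}^{2^k - 1} t_i · h(n - 2i). Then for all k ∈ ℕ and n ≥ 2^{k+1} - 2: F(0,2n) = h(2n) and F(k,2n) = F(k-1,n) for k ≥ 1; moreover F(0,2n+1) = n+1, F(1,2n+1) = 1, and F(k,2n+1) = 0 for all k ≥ 2. -/

import Mathlib

/-- `F h t k m = ∑_{i=0}^{2^k - 1} t i * h (m - 2i)`. -/
def metaF (h : ℤ → ℕ) (t : ℕ → ℤ) (k : ℕ) (m : ℤ) : ℤ :=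
  ∑ i ∈ Finset.range (2 ^ k), t i * (h (m - 2 * i) : ℤ)

lemma sum_split (f : ℕ → ℤ) (m : ℕ) :
    ∑ i ∈ Finset.range (2 * m), f i = ∑ j ∈ Finset.range m, (f (2 * j) + f (2 * j + 1)) := by
  induction m with
  | zero => simp
  | succ m ih =>
      rw [Nat.mul_succ, Finset.sum_range_succ, Finset.sum_range_succ, Finset.sum_range_succ, ih]
      ring

lemma tmSum (t : ℕ → ℤ)
    (hte : ∀ n : ℕ, t (2 * n) = t n) (hto : ∀ n : ℕ, t (2 * n + 1) = - t n)
    (m : ℕ) (hm : 1 ≤ m) : ∑ i ∈ Finset.range (2 ^ m), t i = 0 := by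
  obtain ⟨m', rfl⟩ : ∃ m', m = m' + 1 := ⟨m - 1, by omega⟩
  rw [show (2:ℕ) ^ (m' + 1) = 2 * 2 ^ m' from by ring, sum_split]
  simp [hte, hto]

lemma hkey (h : ℤ → ℕ)
    (hinit : ∀ n : ℤ, n ≤ 1 → h n = 1)
    (hrec : ∀ n : ℤ, 2 ≤ n → h n = h (n - (h (n - 1) : ℤ)) + h (n - 2)) :
    ∀ n : ℕ, h (2 * (n : ℤ) + 1) = n + 1 ∧ 2 * n ≤ h (2 * (n : ℤ)) ∧
      (1 ≤ n → h (2 * (n : ℤ)) = h (2 * (n : ℤ) - 2) + h (n : ℤ)) := by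
  intro n
  induction n using Nat.strong_induction_on with
  | _ n ih =>
    match n with
    | 0 => exact ⟨hinit 1 le_rfl, by simp, by omega⟩
    | (m + 1) =>
      set n := m + 1 with hn
      have hB' : h (2 * (m : ℤ) + 1) = m + 1 := (ih m (by omega)).1
      have hodd : h (2 * (n : ℤ) - 1) = n := by
        have : 2 * (n : ℤ) - 1 = 2 * (m : ℤ) + 1 := by push_cast [hn]; ring
        rw [this, hB']
      have hA : h (2 * (n : ℤ)) = h (2 * (n : ℤ) - 2) + h (n : ℤ) := by
        have h2 : (2 : ℤ) ≤ 2 * n := by push_cast; omega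
        rw [hrec _ h2, hodd]
        have : 2 * (n : ℤ) - (n : ℤ) = (n : ℤ) := by ring
        rw [this, Nat.add_comm]
      have hC : 2 * n ≤ h (2 * (n : ℤ)) := by
        rcases Nat.eq_or_lt_of_le (show 1 ≤ n by omega) with h1 | h1
        · have e0 : 2 * (n : ℤ) - 2 = 0 := by rw [← h1]; ring
          have e1 : (n : ℤ) = 1 := by rw [← h1]; norm_num
          rw [hA, e0, e1, hinit 0 (by norm_num), hinit 1 le_rfl]
          omega
        · have hn2 : 2 ≤ h (n : ℤ) := by
            rcases Nat.even_or_odd n with ⟨c, hc⟩ | ⟨c, hc⟩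
            · have := (ih c (by omega)).2.1
              have hcast : (n : ℤ) = 2 * (c : ℤ) := by push_cast [hc]; ring
              rw [hcast]; omega
            · have := (ih c (by omega)).1
              have hcast : (n : ℤ) = 2 * (c : ℤ) + 1 := by push_cast [hc]; ring
              rw [hcast, this]; omega
          have hprev : 2 * m ≤ h (2 * (m : ℤ)) := (ih m (by omega)).2.1
          have hcast : 2 * (n : ℤ) - 2 = 2 * (m : ℤ) := by push_cast [hn]; ring
          rw [hA, hcast]; omega
      refine ⟨?_, hC, fun _ => hA⟩
      have h2 : (2 : ℤ) ≤ 2 * (n : ℤ) + 1 := by push_cast; omega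
      rw [hrec _ h2]
      have e1 : 2 * (n : ℤ) + 1 - 1 = 2 * ↑n := by ring
      have e2 : 2 * (n : ℤ) + 1 - 2 = 2 * ↑n - 1 := by ring
      have hle : 2 * (n : ℤ) + 1 - (h (2 * (n : ℤ)) : ℤ) ≤ 1 := by
        have h1 : (2 * n : ℕ) ≤ h (2 * (n : ℤ)) := hC
        omega
      rw [e1, e2, hodd, hinit _ hle]
      omega

/-- relations for `F(k, 2n)` and `F(k, 2n+1)`, where `h = h_{1,1}` and
`t` is the Prouhet–Thue–Morse sequence. -/
theorem stmt2 (h : ℤ → ℕ)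
    (hinit : ∀ n : ℤ, n ≤ 1 → h n = 1)
    (hrec : ∀ n : ℤ, 2 ≤ n → h n = h (n - (h (n - 1) : ℤ)) + h (n - 2))
    (t : ℕ → ℤ) (ht0 : t 0 = 1)
    (hte : ∀ n : ℕ, t (2 * n) = t n) (hto : ∀ n : ℕ, t (2 * n + 1) = - t n) :
    ∀ k : ℕ, ∀ n : ℕ, 2 ^ (k + 1) - 2 ≤ (n : ℤ) →
      (k = 0 → metaF h t 0 (2 * n) = (h (2 * n) : ℤ) ∧
        metaF h t 0 (2 * n + 1) = (n : ℤ) + 1) ∧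
      (1 ≤ k → metaF h t k (2 * n) = metaF h t (k - 1) n) ∧
      (k = 1 → metaF h t 1 (2 * n + 1) = 1) ∧
      (2 ≤ k → metaF h t k (2 * n + 1) = 0) := by
  intro k n hn
  have hnn : 2 ^ (k + 1) ≤ n + 2 := by
    have h1 : ((2 ^ (k + 1) : ℕ) : ℤ) ≤ (n : ℤ) + 2 := by push_cast; omega
    exact_mod_cast h1
  refine ⟨?_, ?_, ?_, ?_⟩
  · rintro rfl
    constructor
    · simp [metaF, ht0]
    · have hB := (hkey h hinit hrec n).1
      simp [metaF, ht0, hB]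
  · intro hk
    obtain ⟨k', rfl⟩ : ∃ k', k = k' + 1 := ⟨k - 1, by omega⟩
    have hpow : (2:ℕ) ^ (k' + 2) = 4 * 2 ^ k' := by ring
    unfold metaF
    rw [show (2:ℕ) ^ (k' + 1) = 2 * 2 ^ k' from by ring, sum_split]
    simp only [Nat.add_sub_cancel]
    refine Finset.sum_congr rfl fun j hj => ?_
    have hj' : j < 2 ^ k' := Finset.mem_range.mp hj
    set m := n - 2 * j with hm
    have hm1 : 1 ≤ m := by omega
    have hA := (hkey h hinit hrec m).2.2 hm1
    have e1 : 2 * (n : ℤ) - 2 * ((2 * j : ℕ) : ℤ) = 2 * (m : ℤ) := by omega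
    have e2 : 2 * (n : ℤ) - 2 * ((2 * j + 1 : ℕ) : ℤ) = 2 * (m : ℤ) - 2 := by omega
    have e3 : (n : ℤ) - 2 * (j : ℤ) = (m : ℤ) := by omega
    rw [e1, e2, e3, hte, hto, hA]
    push_cast
    ring
  · rintro rfl
    have hn1 : 1 ≤ n := by omega
    obtain ⟨p, rfl⟩ : ∃ p, n = p + 1 := ⟨n - 1, by omega⟩
    have hB1 := (hkey h hinit hrec (p + 1)).1
    have hB0 := (hkey h hinit hrec p).1
    have ht1 : t 1 = -1 := by
      have := hto 0; simpa [ht0] using this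
    unfold metaF
    rw [show (2:ℕ) ^ 1 = 2 from by norm_num, Finset.sum_range_succ, Finset.sum_range_one]
    have e1 : 2 * ((p : ℤ) + 1) + 1 - 2 * ((0 : ℕ) : ℤ) = 2 * ((p + 1 : ℕ) : ℤ) + 1 := by
      push_cast; ring
    have e2 : 2 * ((p : ℤ) + 1) + 1 - 2 * ((1 : ℕ) : ℤ) = 2 * (p : ℤ) + 1 := by
      push_cast; ring
    rw [show ((p:ℤ) + 1) = (((p+1:ℕ)):ℤ) from by push_cast; ring] at *
    rw [e1, e2, hB1, hB0, ht0, ht1]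
    push_cast
    ring
  · intro hk
    obtain ⟨k'', rfl⟩ : ∃ k'', k = k'' + 2 := ⟨k - 2, by omega⟩
    have hpow : (2:ℕ) ^ (k'' + 3) = 8 * 2 ^ k'' := by ring
    unfold metaF
    rw [show (2:ℕ) ^ (k'' + 2) = 2 * 2 ^ (k'' + 1) from by ring, sum_split]
    have hz : ∀ j ∈ Finset.range (2 ^ (k'' + 1)),
        (t (2 * j) * (h (2 * (n : ℤ) + 1 - 2 * ((2 * j : ℕ) : ℤ)) : ℤ) +
          t (2 * j + 1) * (h (2 * (n : ℤ) + 1 - 2 * ((2 * j + 1 : ℕ) : ℤ)) : ℤ)) = t j := by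
      intro j hj
      have hj' : j < 2 ^ (k'' + 1) := Finset.mem_range.mp hj
      have hjp : 2 ^ (k'' + 1) = 2 * 2 ^ k'' := by ring
      set m := n - 2 * j with hm
      have hp1 : (2:ℕ) ^ (k'' + 2 + 1) = 8 * 2 ^ k'' := by ring
      have hp2 : (2:ℕ) ^ (k'' + 1) = 2 * 2 ^ k'' := by ring
      have hm1 : 1 ≤ m := by omega
      obtain ⟨q, hq⟩ : ∃ q, m = q + 1 := ⟨m - 1, by omega⟩
      have hBm := (hkey h hinit hrec m).1
      have hBq := (hkey h hinit hrec q).1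
      have e1 : 2 * (n : ℤ) + 1 - 2 * ((2 * j : ℕ) : ℤ) = 2 * (m : ℤ) + 1 := by omega
      have e2 : 2 * (n : ℤ) + 1 - 2 * ((2 * j + 1 : ℕ) : ℤ) = 2 * (q : ℤ) + 1 := by omega
      rw [e1, e2, hBm, hBq, hte, hto, hq]
      push_cast
      ring
    rw [Finset.sum_congr rfl hz]
    exact tmSum t hte hto (k'' + 1) (by omega)
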